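/- Let f, g ∈ ℂ⟦x,y⟧ be such that the intersection number ν := dim_ℂ ℂ⟦x,y⟧/(f, g) is finite. Then for every n ≥ 1, dim_ℂ ℂ⟦x,y⟧/(f(x^n, y^n), g(x^n, y^n)) = n²·ν. (This computes the intersection multiplicity at a preimage of a vertex of the Kummer transforms of two local branches: if δ_i and δ_j are distinct local branches of a curve at a vertex, their pullbacks satisfy (δ̃_i · δ̃_j)_Q = n² (δ_i · δ_j)_P.) -/

import Mathlib

noncomputable section

/-- Formal partial derivative `∂f/∂(x_i)` of a two-variable formal power series. -/
def pderiv2 (i : Fin 2) (f : MvPowerSeries (Fin 2) ℂ) : MvPowerSeries (Fin 2) ℂ :=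
  fun e => ((e i : ℂ) + 1) * MvPowerSeries.coeff (R := ℂ) (e + Finsupp.single i 1) f

/-- Substitution `x ↦ xⁿ` in a two-variable formal power series `f(x,y)`:
the coefficient of `x^a y^b` in `f(xⁿ, y)` is the coefficient of `x^(a/n) y^b` of `f`
when `n ∣ a`, and `0` otherwise. -/
def substX (n : ℕ) (f : MvPowerSeries (Fin 2) ℂ) : MvPowerSeries (Fin 2) ℂ :=
  fun e => if n ∣ e 0
    then MvPowerSeries.coeff (R := ℂ) (Finsupp.single 0 (e 0 / n) + Finsupp.single 1 (e 1)) f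
    else 0

/-- Substitution `x ↦ xⁿ`, `y ↦ yⁿ` in a two-variable formal power series `f(x,y)`. -/
def substXY (n : ℕ) (f : MvPowerSeries (Fin 2) ℂ) : MvPowerSeries (Fin 2) ℂ :=
  fun e => if n ∣ e 0 ∧ n ∣ e 1
    then MvPowerSeries.coeff (R := ℂ) (Finsupp.single 0 (e 0 / n) + Finsupp.single 1 (e 1 / n)) f
    else 0

/-- The one-variable power series `f(0, y)`. -/
def restY (f : MvPowerSeries (Fin 2) ℂ) : PowerSeries ℂ :=
  PowerSeries.mk fun b => MvPowerSeries.coeff (R := ℂ) (Finsupp.single 1 b) f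

/-- The one-variable power series `f(x, 0)`. -/
def restX (f : MvPowerSeries (Fin 2) ℂ) : PowerSeries ℂ :=
  PowerSeries.mk fun a => MvPowerSeries.coeff (R := ℂ) (Finsupp.single 0 a) f

namespace KummerProofAux

open MvPowerSeries

/-- Abbreviation for the ambient power-series ring. -/
abbrev R := MvPowerSeries (Fin 2) ℂ

/-- The exponent `(a, b)` as a finitely supported function on `Fin 2`. -/
def rep (a b : ℕ) : Fin 2 →₀ ℕ := Finsupp.single 0 a + Finsupp.single 1 b

@[simp] lemma rep0 (a b : ℕ) : rep a b 0 = a := by simp [rep]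
@[simp] lemma rep1 (a b : ℕ) : rep a b 1 = b := by simp [rep]

lemma rep_eq (e : Fin 2 →₀ ℕ) : rep (e 0) (e 1) = e := by
  ext a
  fin_cases a
  · simpa using (rep0 (e 0) (e 1))
  · simpa using (rep1 (e 0) (e 1))

lemma ext2 {e e' : Fin 2 →₀ ℕ} (h0 : e 0 = e' 0) (h1 : e 1 = e' 1) : e = e' := by
  rw [← rep_eq e, ← rep_eq e', h0, h1]

lemma rep_add (a b c d : ℕ) : rep a b + rep c d = rep (a + c) (b + d) := by
  apply ext2 <;> simp [Finsupp.add_apply]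

/-- The `ℂ`-linear "shifted Kummer substitution": `T n i j h = xⁱ yʲ · h(xⁿ, yⁿ)`. -/
def T (n i j : ℕ) (h : R) : R :=
  fun e => if e 0 % n = i ∧ e 1 % n = j then h (rep (e 0 / n) (e 1 / n)) else 0

/-- Inverse coefficient extraction for `T n i j`. -/
def Ph (n i j : ℕ) (h : R) : R :=
  fun e => h (rep (n * e 0 + i) (n * e 1 + j))

lemma coeff_T (n i j : ℕ) (h : R) (d : Fin 2 →₀ ℕ) :
    MvPowerSeries.coeff (R := ℂ) d (T n i j h) =
      if d 0 % n = i ∧ d 1 % n = j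
      then MvPowerSeries.coeff (R := ℂ) (rep (d 0 / n) (d 1 / n)) h else 0 := rfl

lemma coeff_Ph (n i j : ℕ) (h : R) (d : Fin 2 →₀ ℕ) :
    MvPowerSeries.coeff (R := ℂ) d (Ph n i j h) =
      MvPowerSeries.coeff (R := ℂ) (rep (n * d 0 + i) (n * d 1 + j)) h := rfl

lemma T_ne {n i j : ℕ} {h : R} {d : Fin 2 →₀ ℕ}
    (hd : MvPowerSeries.coeff (R := ℂ) d (T n i j h) ≠ 0) : d 0 % n = i ∧ d 1 % n = j := by
  by_contra hcon
  exact hd (by rw [coeff_T, if_neg hcon])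

lemma substXY_eq (n : ℕ) (f : R) : substXY n f = T n 0 0 f := by
  funext e
  simp only [substXY, T, MvPowerSeries.coeff_apply, Nat.dvd_iff_mod_eq_zero]
  rfl

lemma div_add_of_mod_eq_zero {n a b : ℕ} (hn : 0 < n) (hb : b % n = 0) :
    (a + b) / n = a / n + b / n := by
  obtain ⟨k, rfl⟩ := Nat.dvd_of_mod_eq_zero hb
  rw [Nat.add_mul_div_left _ _ hn, Nat.mul_div_cancel_left _ hn]

lemma T_add (n i j : ℕ) (a b : R) : T n i j (a + b) = T n i j a + T n i j b := by
  funext e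
  show T n i j (a + b) e = T n i j a e + T n i j b e
  simp only [T]
  by_cases hc : e 0 % n = i ∧ e 1 % n = j
  · simp only [if_pos hc]; rfl
  · simp [if_neg hc]

lemma T_smul (n i j : ℕ) (c : ℂ) (a : R) : T n i j (c • a) = c • T n i j a := by
  funext e
  show T n i j (c • a) e = c • T n i j a e
  simp only [T]
  by_cases hc : e 0 % n = i ∧ e 1 % n = j
  · simp only [if_pos hc]; rfl
  · simp [if_neg hc]

/-- The key multiplicative property of the shifted substitutions. -/
lemma T_mul_T {n : ℕ} (hn : 0 < n) {i j : ℕ} (hi : i < n) (hj : j < n) (h f : R) :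
    T n i j h * T n 0 0 f = T n i j (h * f) := by
  classical
  apply MvPowerSeries.ext
  intro e
  rw [MvPowerSeries.coeff_mul]
  by_cases hc : e 0 % n = i ∧ e 1 % n = j
  · rw [coeff_T, if_pos hc, MvPowerSeries.coeff_mul]
    refine Finset.sum_bij_ne_zero
      (fun (p : (Fin 2 →₀ ℕ) × (Fin 2 →₀ ℕ)) _ _ =>
        (rep (p.1 0 / n) (p.1 1 / n), rep (p.2 0 / n) (p.2 1 / n)))
      ?_ ?_ ?_ ?_
    · -- maps into antidiagonal
      rintro ⟨p, q⟩ hmem hne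
      have hp := T_ne (left_ne_zero_of_mul hne)
      have hq := T_ne (right_ne_zero_of_mul hne)
      rw [Finset.HasAntidiagonal.mem_antidiagonal] at hmem ⊢
      have h0 : p 0 + q 0 = e 0 := by rw [← hmem]; simp [Finsupp.add_apply]
      have h1 : p 1 + q 1 = e 1 := by rw [← hmem]; simp [Finsupp.add_apply]
      rw [rep_add]
      congr 1
      · rw [← h0, div_add_of_mod_eq_zero hn hq.1]
      · rw [← h1, div_add_of_mod_eq_zero hn hq.2]
    · -- injective
      rintro ⟨p, q⟩ h₁₁ h₁₂ ⟨p', q'⟩ h₂₁ h₂₂ heq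
      have hp := T_ne (left_ne_zero_of_mul h₁₂)
      have hq := T_ne (right_ne_zero_of_mul h₁₂)
      have hp' := T_ne (left_ne_zero_of_mul h₂₂)
      have hq' := T_ne (right_ne_zero_of_mul h₂₂)
      obtain ⟨e1, e2⟩ := Prod.mk.injEq .. ▸ heq
      have key : ∀ (a b : ℕ), a / n = b / n → a % n = b % n → a = b := by
        intro a b hdiv hmod
        rw [← Nat.div_add_mod a n, ← Nat.div_add_mod b n, hdiv, hmod]
      refine Prod.ext (ext2 ?_ ?_) (ext2 ?_ ?_)
      · exact key _ _ (by simpa using congrArg (fun z => z 0) e1) (hp.1.trans hp'.1.symm)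
      · exact key _ _ (by simpa using congrArg (fun z => z 1) e1) (hp.2.trans hp'.2.symm)
      · exact key _ _ (by simpa using congrArg (fun z => z 0) e2) (hq.1.trans hq'.1.symm)
      · exact key _ _ (by simpa using congrArg (fun z => z 1) e2) (hq.2.trans hq'.2.symm)
    · -- surjective
      rintro ⟨p', q'⟩ hmem hne
      rw [Finset.HasAntidiagonal.mem_antidiagonal] at hmem
      have h0 : p' 0 + q' 0 = e 0 / n := by
        simpa [Finsupp.add_apply] using congrArg (fun z : Fin 2 →₀ ℕ => z 0) hmem
      have h1 : p' 1 + q' 1 = e 1 / n := by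
        simpa [Finsupp.add_apply] using congrArg (fun z : Fin 2 →₀ ℕ => z 1) hmem
      refine ⟨(rep (n * p' 0 + i) (n * p' 1 + j), rep (n * q' 0) (n * q' 1)), ?_, ?_, ?_⟩
      · rw [Finset.HasAntidiagonal.mem_antidiagonal, rep_add]
        apply ext2 <;> simp only [rep0, rep1]
        · rw [show n * p' 0 + i + n * q' 0 = n * (p' 0 + q' 0) + i by ring, h0, ← hc.1]
          exact Nat.div_add_mod (e 0) n
        · rw [show n * p' 1 + j + n * q' 1 = n * (p' 1 + q' 1) + j by ring, h1, ← hc.2]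
          exact Nat.div_add_mod (e 1) n
      · -- nonzero
        have c1 : (n * p' 0 + i) % n = i := by
          rw [Nat.mul_add_mod, Nat.mod_eq_of_lt hi]
        have c2 : (n * p' 1 + j) % n = j := by
          rw [Nat.mul_add_mod, Nat.mod_eq_of_lt hj]
        have d1 : (n * p' 0 + i) / n = p' 0 := by
          rw [Nat.mul_add_div hn, Nat.div_eq_of_lt hi, add_zero]
        have d2 : (n * p' 1 + j) / n = p' 1 := by
          rw [Nat.mul_add_div hn, Nat.div_eq_of_lt hj, add_zero]
        simp only [coeff_T, rep0, rep1, c1, c2, d1, d2, Nat.mul_mod_right,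
          Nat.mul_div_cancel_left _ hn, and_self, if_true, if_pos]
        rw [rep_eq p']
        rw [show rep (q' 0) (q' 1) = q' from rep_eq q']
        exact hne
      · -- equals b
        have d1 : (n * p' 0 + i) / n = p' 0 := by
          rw [Nat.mul_add_div hn, Nat.div_eq_of_lt hi, add_zero]
        have d2 : (n * p' 1 + j) / n = p' 1 := by
          rw [Nat.mul_add_div hn, Nat.div_eq_of_lt hj, add_zero]
        simp only [rep0, rep1, d1, d2, Nat.mul_div_cancel_left _ hn]
        rw [rep_eq p', rep_eq q']
    · -- values agree
      rintro ⟨p, q⟩ hmem hne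
      have hp := T_ne (left_ne_zero_of_mul hne)
      have hq := T_ne (right_ne_zero_of_mul hne)
      simp only [coeff_T, if_pos hp, if_pos hq, rep0, rep1]
  · rw [coeff_T, if_neg hc]
    refine Finset.sum_eq_zero ?_
    rintro ⟨p, q⟩ hmem
    by_contra hne
    have hp := T_ne (left_ne_zero_of_mul hne)
    have hq := T_ne (right_ne_zero_of_mul hne)
    rw [Finset.HasAntidiagonal.mem_antidiagonal] at hmem
    apply hc
    have h0 : e 0 = p 0 + q 0 := by rw [← hmem]; simp [Finsupp.add_apply]
    have h1 : e 1 = p 1 + q 1 := by rw [← hmem]; simp [Finsupp.add_apply]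
    constructor
    · obtain ⟨k, hk⟩ := Nat.dvd_of_mod_eq_zero hq.1
      rw [h0, hk, Nat.add_mul_mod_self_left, hp.1]
    · obtain ⟨k, hk⟩ := Nat.dvd_of_mod_eq_zero hq.2
      rw [h1, hk, Nat.add_mul_mod_self_left, hp.2]

/-- Every power series decomposes as the sum of its `n²` Kummer components. -/
lemma sum_T_Ph {n : ℕ} (hn : 0 < n) (h : R) :
    ∑ ι : Fin n × Fin n, T n ι.1 ι.2 (Ph n ι.1 ι.2 h) = h := by
  apply MvPowerSeries.ext
  intro e
  rw [map_sum]
  rw [Finset.sum_eq_single (⟨⟨e 0 % n, Nat.mod_lt _ hn⟩, ⟨e 1 % n, Nat.mod_lt _ hn⟩⟩ :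
    Fin n × Fin n)]
  · rw [coeff_T, if_pos ⟨rfl, rfl⟩, coeff_Ph]
    simp only [rep0, rep1]
    rw [Nat.div_add_mod, Nat.div_add_mod, rep_eq]
  · rintro ⟨a, b⟩ - hne
    rw [coeff_T]
    refine if_neg fun hcon => hne ?_
    exact Prod.ext (Fin.ext hcon.1.symm) (Fin.ext hcon.2.symm)
  · intro hcon
    exact absurd (Finset.mem_univ _) hcon

lemma Ph_T_same {n i j : ℕ} (hn : 0 < n) (hi : i < n) (hj : j < n) (h : R) :
    Ph n i j (T n i j h) = h := by
  apply MvPowerSeries.ext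
  intro d
  rw [coeff_Ph, coeff_T]
  have c1 : (n * d 0 + i) % n = i := by rw [Nat.mul_add_mod, Nat.mod_eq_of_lt hi]
  have c2 : (n * d 1 + j) % n = j := by rw [Nat.mul_add_mod, Nat.mod_eq_of_lt hj]
  have d1 : (n * d 0 + i) / n = d 0 := by rw [Nat.mul_add_div hn, Nat.div_eq_of_lt hi, add_zero]
  have d2 : (n * d 1 + j) / n = d 1 := by rw [Nat.mul_add_div hn, Nat.div_eq_of_lt hj, add_zero]
  simp only [rep0, rep1, c1, c2, d1, d2, and_self, if_true, rep_eq]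

lemma Ph_T_ne {n i j i' j' : ℕ} (hi : i < n) (hj : j < n)
    (hne : ¬(i' = i ∧ j' = j)) (h : R) :
    Ph n i j (T n i' j' h) = 0 := by
  apply MvPowerSeries.ext
  intro d
  rw [coeff_Ph, coeff_T]
  have c1 : (n * d 0 + i) % n = i := by rw [Nat.mul_add_mod, Nat.mod_eq_of_lt hi]
  have c2 : (n * d 1 + j) % n = j := by rw [Nat.mul_add_mod, Nat.mod_eq_of_lt hj]
  simp only [rep0, rep1, c1, c2, map_zero]
  exact if_neg (fun hcon => hne ⟨hcon.1.symm, hcon.2.symm⟩)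

lemma Ph_sum {n i j : ℕ} {α : Type*} (s : Finset α) (F : α → R) :
    Ph n i j (∑ κ ∈ s, F κ) = ∑ κ ∈ s, Ph n i j (F κ) := by
  apply MvPowerSeries.ext
  intro d
  calc MvPowerSeries.coeff (R := ℂ) d (Ph n i j (∑ κ ∈ s, F κ))
      = MvPowerSeries.coeff (R := ℂ) (rep (n * d 0 + i) (n * d 1 + j)) (∑ κ ∈ s, F κ) := rfl
    _ = ∑ κ ∈ s, MvPowerSeries.coeff (R := ℂ) (rep (n * d 0 + i) (n * d 1 + j)) (F κ) :=
        map_sum _ _ _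
    _ = ∑ κ ∈ s, MvPowerSeries.coeff (R := ℂ) d (Ph n i j (F κ)) := rfl
    _ = MvPowerSeries.coeff (R := ℂ) d (∑ κ ∈ s, Ph n i j (F κ)) := (map_sum _ _ _).symm

/-- `Psi` assembles the `n²` Kummer components into a single power series. -/
def Psi (n : ℕ) : ((Fin n × Fin n) → R) →ₗ[ℂ] R where
  toFun h := ∑ ι : Fin n × Fin n, T n ι.1 ι.2 (h ι)
  map_add' a b := by simp only [Pi.add_apply, T_add, Finset.sum_add_distrib]
  map_smul' c a := by simp only [Pi.smul_apply, T_smul, RingHom.id_apply, Finset.smul_sum]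

/-- `Phi` extracts the `n²` Kummer components of a power series. -/
def Phi (n : ℕ) : R →ₗ[ℂ] ((Fin n × Fin n) → R) where
  toFun r ι := Ph n ι.1 ι.2 r
  map_add' a b := by funext ι; rfl
  map_smul' c a := by funext ι; rfl

/-- The Kummer decomposition of `ℂ⟦x,y⟧` as a `ℂ`-linear equivalence. -/
def PsiEquiv {n : ℕ} (hn : 0 < n) : ((Fin n × Fin n) → R) ≃ₗ[ℂ] R :=
  LinearEquiv.ofLinear (Psi n) (Phi n)
    (by
      apply LinearMap.ext; intro r
      show Psi n (Phi n r) = r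
      exact sum_T_Ph hn r)
    (by
      apply LinearMap.ext; intro h
      funext ι
      show Ph n ι.1 ι.2 (∑ κ : Fin n × Fin n, T n κ.1 κ.2 (h κ)) = h ι
      rw [Ph_sum]
      rw [Finset.sum_eq_single ι]
      · exact Ph_T_same hn ι.1.isLt ι.2.isLt _
      · rintro κ - hκ
        refine Ph_T_ne ι.1.isLt ι.2.isLt (fun hcon => hκ ?_) _
        exact Prod.ext (Fin.ext hcon.1) (Fin.ext hcon.2)
      · intro hcon; exact absurd (Finset.mem_univ _) hcon)

lemma PsiEquiv_apply {n : ℕ} (hn : 0 < n) (h : (Fin n × Fin n) → R) :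
    PsiEquiv hn h = ∑ ι : Fin n × Fin n, T n ι.1 ι.2 (h ι) := rfl

end KummerProofAux

set_option maxHeartbeats 2000000 in
open KummerProofAux in
/-- Intersection multiplicity of Kummer transforms at a preimage of a vertex.
Let `f, g ∈ ℂ⟦x,y⟧` with finite intersection number `ν = dim_ℂ ℂ⟦x,y⟧/(f, g)`.
Then for every `n ≥ 1`, `dim_ℂ ℂ⟦x,y⟧/(f(xⁿ,yⁿ), g(xⁿ,yⁿ)) = n²·ν`. -/
theorem kummer_vertex_intersection (f g : MvPowerSeries (Fin 2) ℂ)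
    (hfin : Module.Finite ℂ (MvPowerSeries (Fin 2) ℂ ⧸ Ideal.span {f, g}))
    (ν : ℕ)
    (hν : Module.finrank ℂ (MvPowerSeries (Fin 2) ℂ ⧸ Ideal.span {f, g}) = ν)
    (n : ℕ) (hn : 1 ≤ n) :
    Module.Finite ℂ
      (MvPowerSeries (Fin 2) ℂ ⧸ Ideal.span {substXY n f, substXY n g}) ∧
    Module.finrank ℂ
      (MvPowerSeries (Fin 2) ℂ ⧸ Ideal.span {substXY n f, substXY n g}) = n ^ 2 * ν := by
  classical
  have hn0 : 0 < n := hn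
  set I : Ideal R := Ideal.span {f, g} with hI
  set J : Ideal R := Ideal.span {substXY n f, substXY n g} with hJ
  set P : Submodule ℂ ((Fin n × Fin n) → R) :=
    Submodule.pi Set.univ (fun _ : Fin n × Fin n => I.restrictScalars ℂ) with hP
  have hfJ : substXY n f ∈ J := Ideal.subset_span (by simp)
  have hgJ : substXY n g ∈ J := Ideal.subset_span (by simp)
  have hmap : Submodule.map ((PsiEquiv hn0 : ((Fin n × Fin n) → R) →ₗ[ℂ] R)) P = J.restrictScalars ℂ := by
    apply le_antisymm
    · rintro x ⟨c, hc, rfl⟩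
      show PsiEquiv hn0 c ∈ J
      rw [PsiEquiv_apply]
      refine Submodule.sum_mem _ fun ι _ => ?_
      have hcι : c ι ∈ I := hc ι (Set.mem_univ ι)
      obtain ⟨a, b, hab⟩ := Ideal.mem_span_pair.mp hcι
      rw [← hab, T_add, ← T_mul_T hn0 ι.1.isLt ι.2.isLt, ← T_mul_T hn0 ι.1.isLt ι.2.isLt,
        ← substXY_eq, ← substXY_eq]
      exact Submodule.add_mem _ (Ideal.mul_mem_left _ _ hfJ) (Ideal.mul_mem_left _ _ hgJ)
    · intro x hx
      have hxJ : x ∈ J := hx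
      obtain ⟨a, b, hab⟩ := Ideal.mem_span_pair.mp hxJ
      refine ⟨fun ι => Ph n ι.1 ι.2 a * f + Ph n ι.1 ι.2 b * g, ?_, ?_⟩
      · intro ι _
        exact Submodule.add_mem _
          (Ideal.mul_mem_left _ _ (Ideal.subset_span (by simp)))
          (Ideal.mul_mem_left _ _ (Ideal.subset_span (by simp)))
      · show (∑ ι : Fin n × Fin n,
            T n ι.1 ι.2 (Ph n ι.1 ι.2 a * f + Ph n ι.1 ι.2 b * g)) = x
        rw [← hab]
        simp only [T_add]
        rw [Finset.sum_add_distrib]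
        congr 1
        · calc ∑ ι : Fin n × Fin n, T n ι.1 ι.2 (Ph n ι.1 ι.2 a * f)
              = ∑ ι : Fin n × Fin n, T n ι.1 ι.2 (Ph n ι.1 ι.2 a) * T n 0 0 f :=
                Finset.sum_congr rfl fun ι _ => (T_mul_T hn0 ι.1.isLt ι.2.isLt _ _).symm
            _ = (∑ ι : Fin n × Fin n, T n ι.1 ι.2 (Ph n ι.1 ι.2 a)) * T n 0 0 f := by
                rw [Finset.sum_mul]
            _ = a * substXY n f := by rw [sum_T_Ph hn0, substXY_eq]
        · calc ∑ ι : Fin n × Fin n, T n ι.1 ι.2 (Ph n ι.1 ι.2 b * g)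
              = ∑ ι : Fin n × Fin n, T n ι.1 ι.2 (Ph n ι.1 ι.2 b) * T n 0 0 g :=
                Finset.sum_congr rfl fun ι _ => (T_mul_T hn0 ι.1.isLt ι.2.isLt _ _).symm
            _ = (∑ ι : Fin n × Fin n, T n ι.1 ι.2 (Ph n ι.1 ι.2 b)) * T n 0 0 g := by
                rw [Finset.sum_mul]
            _ = b * substXY n g := by rw [sum_T_Ph hn0, substXY_eq]
  haveI := hfin
  let e1 : (((Fin n × Fin n) → R) ⧸ P) ≃ₗ[ℂ] (R ⧸ J.restrictScalars ℂ) :=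
    Submodule.Quotient.equiv P (J.restrictScalars ℂ) (PsiEquiv hn0) hmap
  let e2 : (((Fin n × Fin n) → R) ⧸ P) ≃ₗ[ℂ]
      ((Fin n × Fin n) → R ⧸ I.restrictScalars ℂ) :=
    Submodule.quotientPi (fun _ : Fin n × Fin n => I.restrictScalars ℂ)
  let e3 : ((Fin n × Fin n) → R ⧸ I.restrictScalars ℂ) ≃ₗ[ℂ]
      ((Fin n × Fin n) → R ⧸ I) :=
    LinearEquiv.piCongrRight fun _ => Submodule.Quotient.restrictScalarsEquiv ℂ I
  let E : (R ⧸ J) ≃ₗ[ℂ] ((Fin n × Fin n) → R ⧸ I) :=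
    (((Submodule.Quotient.restrictScalarsEquiv ℂ J).symm.trans e1.symm).trans e2).trans e3
  haveI hfinPi : Module.Finite ℂ ((Fin n × Fin n) → R ⧸ I) := by infer_instance
  constructor
  · exact Module.Finite.equiv E.symm
  · rw [E.finrank_eq, Module.finrank_pi_fintype, Finset.sum_congr rfl fun _ _ => hν,
      Finset.sum_const, smul_eq_mul, Finset.card_univ, Fintype.card_prod, Fintype.card_fin, sq]
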